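/- Let E, F, G be Banach spaces, and let S : E → F and T : F → G be bounded linear Fredholm operators. Then the composition T ∘ S is Fredholm with ind(T ∘ S) = ind T + ind S. -/

import Mathlib

open Module

private lemma aux_fd_of_sub_quot {K V : Type*} [Field K] [AddCommGroup V] [Module K V]
    (p : Submodule K V) (h1 : FiniteDimensional K p) (h2 : FiniteDimensional K (V ⧸ p)) :
    FiniteDimensional K V := by
  have : IsNoetherian K V := (isNoetherian_iff_submodule_quotient p).mpr
    ⟨IsNoetherian.iff_fg.2 h1, IsNoetherian.iff_fg.2 h2⟩
  exact IsNoetherian.iff_fg.1 this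

/-- A continuous linear map between Banach spaces whose range has finite codimension has
closed range. -/
private lemma aux_closed_range {X Y : Type*}
    [NormedAddCommGroup X] [NormedSpace ℝ X] [CompleteSpace X]
    [NormedAddCommGroup Y] [NormedSpace ℝ Y] [CompleteSpace Y]
    (u : X →L[ℝ] Y) (h : FiniteDimensional ℝ (Y ⧸ LinearMap.range (u : X →ₗ[ℝ] Y))) :
    IsClosed (LinearMap.range (u : X →ₗ[ℝ] Y) : Set Y) := by
  obtain ⟨M, hM⟩ := Submodule.exists_isCompl (LinearMap.range (u : X →ₗ[ℝ] Y))
  have hMfd : FiniteDimensional ℝ M :=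
    (Submodule.quotientEquivOfIsCompl _ M hM).finiteDimensional
  have hMclosed : IsClosed (M : Set Y) := Submodule.closed_of_finiteDimensional M
  have : CompleteSpace M := hMclosed.completeSpace_coe
  set w : X × M →L[ℝ] Y := u.coprod M.subtypeL with hw
  have hwapp : ∀ (x : X) (m : M), w (x, m) = u x + (m : Y) := fun x m => rfl
  have hsurj : Function.Surjective w := by
    intro y
    have hy : y ∈ LinearMap.range (u : X →ₗ[ℝ] Y) ⊔ M := by rw [hM.sup_eq_top]; trivial
    obtain ⟨a, ha, b, hb, hab⟩ := Submodule.mem_sup.1 hy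
    obtain ⟨x, hx⟩ := ha
    exact ⟨(x, ⟨b, hb⟩), by rw [hwapp]; exact (congrArg (· + b) hx).trans hab⟩
  have key : ∀ (x : X) (m : M), (w (x, m) ∈ LinearMap.range (u : X →ₗ[ℝ] Y) ↔ m = 0) := by
    intro x m
    constructor
    · intro hmem
      have h1 : (m : Y) ∈ LinearMap.range (u : X →ₗ[ℝ] Y) := by
        have : (m : Y) = w (x, m) - u x := by rw [hwapp]; abel
        rw [this]
        exact sub_mem hmem (LinearMap.mem_range_self _ x)
      have h2 : (m : Y) ∈ LinearMap.range (u : X →ₗ[ℝ] Y) ⊓ M := ⟨h1, m.2⟩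
      rw [hM.inf_eq_bot] at h2
      exact Subtype.ext h2
    · intro hm
      rw [hwapp, hm]
      simpa using LinearMap.mem_range_self u x
  have hopen : IsOpenMap w := w.isOpenMap hsurj
  have hset : (LinearMap.range (u : X →ₗ[ℝ] Y) : Set Y)ᶜ = w '' (Prod.snd ⁻¹' ({(0 : M)}ᶜ)) := by
    ext y
    constructor
    · intro hy
      obtain ⟨⟨x, m⟩, hxm⟩ := hsurj y
      refine ⟨(x, m), ?_, hxm⟩
      intro hm0
      exact hy (by rw [← hxm]; exact (key x m).2 hm0)
    · rintro ⟨⟨x, m⟩, hm0, rfl⟩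
      intro hmem
      exact hm0 ((key x m).1 hmem)
  rw [← isOpen_compl_iff, hset]
  exact hopen _ (isOpen_compl_singleton.preimage continuous_snd)

set_option maxHeartbeats 1000000 in
/-- The composition of two bounded linear Fredholm operators between Banach spaces is
Fredholm, with index the sum of the indices. -/
theorem stmt_17 {E F G : Type*}
    [NormedAddCommGroup E] [NormedSpace ℝ E] [CompleteSpace E]
    [NormedAddCommGroup F] [NormedSpace ℝ F] [CompleteSpace F]
    [NormedAddCommGroup G] [NormedSpace ℝ G] [CompleteSpace G]
    (S : E →L[ℝ] F) (T : F →L[ℝ] G)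
    (hSker : FiniteDimensional ℝ (LinearMap.ker (S : E →ₗ[ℝ] F)))
    (hSrange : IsClosed (LinearMap.range (S : E →ₗ[ℝ] F) : Set F))
    (hScoker : FiniteDimensional ℝ (F ⧸ LinearMap.range (S : E →ₗ[ℝ] F)))
    (hTker : FiniteDimensional ℝ (LinearMap.ker (T : F →ₗ[ℝ] G)))
    (hTrange : IsClosed (LinearMap.range (T : F →ₗ[ℝ] G) : Set G))
    (hTcoker : FiniteDimensional ℝ (G ⧸ LinearMap.range (T : F →ₗ[ℝ] G))) :
    FiniteDimensional ℝ (LinearMap.ker (T.comp S : E →ₗ[ℝ] G)) ∧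
    IsClosed (LinearMap.range (T.comp S : E →ₗ[ℝ] G) : Set G) ∧
    FiniteDimensional ℝ (G ⧸ LinearMap.range (T.comp S : E →ₗ[ℝ] G)) ∧
    (finrank ℝ (LinearMap.ker (T.comp S : E →ₗ[ℝ] G)) : ℤ) - finrank ℝ (G ⧸ LinearMap.range (T.comp S : E →ₗ[ℝ] G))
      = ((finrank ℝ (LinearMap.ker (T : F →ₗ[ℝ] G)) : ℤ) - finrank ℝ (G ⧸ LinearMap.range (T : F →ₗ[ℝ] G)))
        + ((finrank ℝ (LinearMap.ker (S : E →ₗ[ℝ] F)) : ℤ) - finrank ℝ (F ⧸ LinearMap.range (S : E →ₗ[ℝ] F))) := by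
  classical
  -- notation
  set K : Submodule ℝ E := LinearMap.ker (T.comp S : E →ₗ[ℝ] G) with hKdef
  -- the restriction of S to K
  set h : K →ₗ[ℝ] F := (S : E →ₗ[ℝ] F) ∘ₗ K.subtype with hhdef
  have hkerS_le_K : LinearMap.ker (S : E →ₗ[ℝ] F) ≤ K := by
    intro x hx
    have hx' : S x = 0 := hx
    show T (S x) = 0
    rw [hx', map_zero]
  have hkerh : LinearMap.ker h = (LinearMap.ker (S : E →ₗ[ℝ] F)).comap K.subtype := by
    rw [hhdef, LinearMap.ker_comp]
  have hrangeh : LinearMap.range h = LinearMap.range (S : E →ₗ[ℝ] F) ⊓ LinearMap.ker (T : F →ₗ[ℝ] G) := by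
    rw [hhdef, LinearMap.range_comp, Submodule.range_subtype]
    have : K = (LinearMap.ker (T : F →ₗ[ℝ] G)).comap (S : E →ₗ[ℝ] F) := by
      ext x; simp [hKdef]
    rw [this, Submodule.map_comap_eq]
  have hkerh_fd : FiniteDimensional ℝ (LinearMap.ker h) := by
    rw [hkerh]
    exact (Submodule.comapSubtypeEquivOfLe hkerS_le_K).symm.finiteDimensional
  have hrangeh_fd : FiniteDimensional ℝ (LinearMap.range h) := by
    have hle : LinearMap.range h ≤ LinearMap.ker (T : F →ₗ[ℝ] G) := by
      rw [hrangeh]; exact inf_le_right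
    exact Submodule.finiteDimensional_of_le hle
  -- kernel of the composition is finite dimensional
  have hKfd : FiniteDimensional ℝ K := by
    haveI := hrangeh_fd
    exact aux_fd_of_sub_quot (LinearMap.ker h) hkerh_fd
      (h.quotKerEquivRange.symm.finiteDimensional)
  -- first counting identity
  have eq1 : finrank ℝ (LinearMap.range h) + finrank ℝ (LinearMap.ker (S : E →ₗ[ℝ] F)) = finrank ℝ K := by
    have := h.finrank_range_add_finrank_ker
    rwa [hkerh, (Submodule.comapSubtypeEquivOfLe hkerS_le_K).finrank_eq] at this
  have hkercoe : LinearMap.ker (T : F →ₗ[ℝ] G) = LinearMap.ker (T : F →ₗ[ℝ] G) := rfl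
  have hrangecoe : LinearMap.range (T : F →ₗ[ℝ] G) = LinearMap.range (T : F →ₗ[ℝ] G) := rfl
  -- the induced map on cokernels
  have hcomp : ∀ x : E, T.comp S x = T (S x) := fun x => rfl
  set f : F →ₗ[ℝ] G ⧸ LinearMap.range (T.comp S : E →ₗ[ℝ] G) :=
    (LinearMap.range (T.comp S : E →ₗ[ℝ] G)).mkQ ∘ₗ (T : F →ₗ[ℝ] G) with hfdef
  have hle1 : LinearMap.range (S : E →ₗ[ℝ] F) ≤ LinearMap.ker f := by
    rintro _ ⟨x, rfl⟩
    show (LinearMap.range (T.comp S : E →ₗ[ℝ] G)).mkQ (T (S x)) = 0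
    rw [Submodule.mkQ_apply, Submodule.Quotient.mk_eq_zero]
    exact ⟨x, rfl⟩
  set g : (F ⧸ LinearMap.range (S : E →ₗ[ℝ] F)) →ₗ[ℝ] G ⧸ LinearMap.range (T.comp S : E →ₗ[ℝ] G) :=
    (LinearMap.range (S : E →ₗ[ℝ] F)).liftQ f hle1 with hgdef
  have hrangeg : LinearMap.range g
      = (LinearMap.range (T : F →ₗ[ℝ] G)).map (LinearMap.range (T.comp S : E →ₗ[ℝ] G)).mkQ := by
    rw [hgdef, Submodule.range_liftQ, hfdef, LinearMap.range_comp]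
  -- kernel of f equals range S ⊔ ker T
  have hkerf : LinearMap.ker f = LinearMap.range (S : E →ₗ[ℝ] F) ⊔ LinearMap.ker (T : F →ₗ[ℝ] G) := by
    apply le_antisymm
    · intro y hy
      have hy' : T y ∈ LinearMap.range (T.comp S : E →ₗ[ℝ] G) := by
        have : f y = 0 := hy
        rw [hfdef] at this
        exact (Submodule.Quotient.mk_eq_zero (LinearMap.range (T.comp S : E →ₗ[ℝ] G)) (x := T y)).1 this
      obtain ⟨x, hx⟩ := hy'
      refine Submodule.mem_sup.2 ⟨S x, ⟨x, rfl⟩, y - S x, ?_, by abel⟩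
      show T (y - S x) = 0
      rw [map_sub]
      have : T (S x) = T y := hx
      rw [this, sub_self]
    · refine sup_le hle1 ?_
      intro y hy
      show f y = 0
      rw [hfdef]
      have hy' : T y = 0 := hy
      exact (Submodule.Quotient.mk_eq_zero (LinearMap.range (T.comp S : E →ₗ[ℝ] G)) (x := T y)).2 (by rw [hy']; exact zero_mem _)
  have hkerg : LinearMap.ker g
      = (LinearMap.ker (T : F →ₗ[ℝ] G)).map (LinearMap.range (S : E →ₗ[ℝ] F)).mkQ := by
    rw [hgdef, Submodule.ker_liftQ, hkerf, Submodule.map_sup, Submodule.mkQ_map_self,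
      bot_sup_eq, hkercoe]
  -- rank-nullity for g
  have eq3 : finrank ℝ (LinearMap.range g) + finrank ℝ (LinearMap.ker g)
      = finrank ℝ (F ⧸ LinearMap.range (S : E →ₗ[ℝ] F)) := g.finrank_range_add_finrank_ker
  -- computing finrank of ker g via the restriction of mkQ to ker T
  set pbar : (LinearMap.ker (T : F →ₗ[ℝ] G)) →ₗ[ℝ] F ⧸ LinearMap.range (S : E →ₗ[ℝ] F) :=
    (LinearMap.range (S : E →ₗ[ℝ] F)).mkQ ∘ₗ (LinearMap.ker (T : F →ₗ[ℝ] G)).subtype with hpbardef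
  have hrangepbar : LinearMap.range pbar
      = (LinearMap.ker (T : F →ₗ[ℝ] G)).map (LinearMap.range (S : E →ₗ[ℝ] F)).mkQ := by
    rw [hpbardef, LinearMap.range_comp, Submodule.range_subtype, hkercoe]
  have hkerpbar : LinearMap.ker pbar
      = (LinearMap.range (S : E →ₗ[ℝ] F) ⊓ LinearMap.ker (T : F →ₗ[ℝ] G)).comap (LinearMap.ker (T : F →ₗ[ℝ] G)).subtype := by
    rw [hpbardef, LinearMap.ker_comp, Submodule.ker_mkQ, Submodule.comap_inf]
    have : (LinearMap.ker (T : F →ₗ[ℝ] G)).comap (LinearMap.ker (T : F →ₗ[ℝ] G)).subtype = ⊤ := by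
      ext x; simpa using x.2
    rw [this, inf_top_eq]
  have eq4 : finrank ℝ (LinearMap.ker g) + finrank ℝ (LinearMap.range h)
      = finrank ℝ (LinearMap.ker (T : F →ₗ[ℝ] G)) := by
    have := pbar.finrank_range_add_finrank_ker
    rw [hrangepbar, hkerpbar,
      (Submodule.comapSubtypeEquivOfLe (inf_le_right :
        LinearMap.range (S : E →ₗ[ℝ] F) ⊓ LinearMap.ker (T : F →ₗ[ℝ] G) ≤ LinearMap.ker (T : F →ₗ[ℝ] G))).finrank_eq] at this
    rw [← hkerg] at this
    rw [hrangeh]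
    exact this
  -- finite dimensionality of the cokernel of the composition
  have hle2 : LinearMap.range (T.comp S : E →ₗ[ℝ] G) ≤ LinearMap.range (T : F →ₗ[ℝ] G) := by
    rintro _ ⟨x, rfl⟩
    exact ⟨S x, rfl⟩
  have hquotquot : (((G ⧸ LinearMap.range (T.comp S : E →ₗ[ℝ] G)) ⧸
      ((LinearMap.range (T : F →ₗ[ℝ] G)).map (LinearMap.range (T.comp S : E →ₗ[ℝ] G)).mkQ)))
      ≃ₗ[ℝ] G ⧸ LinearMap.range (T : F →ₗ[ℝ] G) :=
    Submodule.quotientQuotientEquivQuotient _ _ hle2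
  have hWfd : FiniteDimensional ℝ
      ((LinearMap.range (T : F →ₗ[ℝ] G)).map (LinearMap.range (T.comp S : E →ₗ[ℝ] G)).mkQ) := by
    rw [← hrangeg]
    infer_instance
  have hcokfd : FiniteDimensional ℝ (G ⧸ LinearMap.range (T.comp S : E →ₗ[ℝ] G)) :=
    aux_fd_of_sub_quot _ hWfd (hquotquot.symm.finiteDimensional)
  -- second counting identity
  have eq2 : finrank ℝ (G ⧸ LinearMap.range (T : F →ₗ[ℝ] G))
      + finrank ℝ ((LinearMap.range (T : F →ₗ[ℝ] G)).map (LinearMap.range (T.comp S : E →ₗ[ℝ] G)).mkQ)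
      = finrank ℝ (G ⧸ LinearMap.range (T.comp S : E →ₗ[ℝ] G)) := by
    have := Submodule.finrank_quotient_add_finrank
      ((LinearMap.range (T : F →ₗ[ℝ] G)).map (LinearMap.range (T.comp S : E →ₗ[ℝ] G)).mkQ)
    rwa [hquotquot.finrank_eq] at this
  refine ⟨hKfd, aux_closed_range (T.comp S) hcokfd, hcokfd, ?_⟩
  rw [← hrangeg] at eq2
  omega
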